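/- Let ℓ(t) = log(1 + e^{−t}) be the logistic loss and λ > 0. Let H be standard Gaussian and X = GY with G standard Gaussian independent of H and Y ∈ {±1}, so that (H, X) has strictly positive joint density on ℝ². Then the function G_λ(α, Υ) = E[ min_u { (λ/2)(H + Υ X − u)² + α ℓ(u/α) } ] is jointly strictly convex in (α, Υ) on (0, ∞) × ℝ. -/

import Mathlib

open MeasureTheory ProbabilityTheory Filter Set

/-- The logistic loss `ℓ(t) = log(1 + e^{−t})`. -/
noncomputable def logisticLoss (t : ℝ) : ℝ := Real.log (1 + Real.exp (-t))

/-- The standard Gaussian measure on `ℝ`. -/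
noncomputable def stdGaussianR : Measure ℝ := gaussianReal 0 1

lemma logisticLoss_pos (t : ℝ) : 0 < logisticLoss t :=
  Real.log_pos (by have := Real.exp_pos (-t); linarith)

lemma logisticLoss_hasDerivAt (t : ℝ) :
    HasDerivAt logisticLoss (-Real.exp (-t) / (1 + Real.exp (-t))) t := by
  have h1 : HasDerivAt (fun s : ℝ => 1 + Real.exp (-s)) (-Real.exp (-t)) t := by
    have := ((hasDerivAt_id t).neg).exp
    simpa using this.const_add 1
  have h2 := h1.log (by have := Real.exp_pos (-t); positivity)
  exact h2

lemma logisticLoss_continuous : Continuous logisticLoss :=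
  continuous_iff_continuousAt.2 fun t => (logisticLoss_hasDerivAt t).differentiableAt.continuousAt

lemma logisticLoss_deriv (t : ℝ) :
    deriv logisticLoss t = -Real.exp (-t) / (1 + Real.exp (-t)) :=
  (logisticLoss_hasDerivAt t).deriv

lemma logisticLoss_strictConvexOn : StrictConvexOn ℝ Set.univ logisticLoss := by
  apply StrictMono.strictConvexOn_univ_of_deriv logisticLoss_continuous
  intro s t hst
  rw [logisticLoss_deriv, logisticLoss_deriv]
  have hs := Real.exp_pos (-s)
  have ht := Real.exp_pos (-t)
  rw [div_lt_div_iff₀ (by linarith) (by linarith)]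
  have h := Real.exp_lt_exp.2 (neg_lt_neg hst)
  nlinarith [h, hs, ht]

noncomputable def psiF (lam α r u : ℝ) : ℝ :=
  (lam / 2) * (r - u) ^ 2 + α * logisticLoss (u / α)

noncomputable def eeF (lam α r : ℝ) : ℝ := ⨅ u : ℝ, psiF lam α r u

lemma psiF_nonneg {lam α : ℝ} (hlam : 0 < lam) (hα : 0 < α) (r u : ℝ) :
    0 ≤ psiF lam α r u := by
  have := logisticLoss_pos (u / α)
  have : 0 ≤ α * logisticLoss (u / α) := by positivity
  have h2 : 0 ≤ (lam / 2) * (r - u) ^ 2 := by positivity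
  unfold psiF; linarith

lemma psiF_bddBelow {lam α : ℝ} (hlam : 0 < lam) (hα : 0 < α) (r : ℝ) :
    BddBelow (Set.range (psiF lam α r)) :=
  ⟨0, by rintro x ⟨u, rfl⟩; exact psiF_nonneg hlam hα r u⟩

lemma psiF_continuous {lam α : ℝ} (hα : α ≠ 0) (r : ℝ) :
    Continuous (psiF lam α r) := by
  unfold psiF
  exact (continuous_const.mul ((continuous_const.sub continuous_id).pow 2)).add
    (continuous_const.mul (logisticLoss_continuous.comp (continuous_id.div_const α)))

lemma exists_min_psiF {lam α : ℝ} (hlam : 0 < lam) (hα : 0 < α) (r : ℝ) :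
    ∃ u0 : ℝ, ∀ u : ℝ, psiF lam α r u0 ≤ psiF lam α r u := by
  set M : ℝ := α * logisticLoss (r / α) with hM
  have hM0 : 0 ≤ M := le_of_lt (by have := logisticLoss_pos (r / α); positivity)
  set R : ℝ := Real.sqrt (2 * M / lam) + 1 with hR
  have hRpos : 0 < R := by positivity
  have hsq : Real.sqrt (2 * M / lam) ^ 2 = 2 * M / lam :=
    Real.sq_sqrt (by positivity)
  obtain ⟨u0, hu0mem, hu0⟩ :=
    (isCompact_Icc (a := r - R) (b := r + R)).exists_isMinOn
      (Set.nonempty_Icc.2 (by linarith))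
      ((psiF_continuous (ne_of_gt hα) r).continuousOn)
  refine ⟨u0, fun u => ?_⟩
  by_cases hu : u ∈ Set.Icc (r - R) (r + R)
  · exact hu0 hu
  · have hr : psiF lam α r r = M := by simp [psiF, hM]
    have h1 : psiF lam α r u0 ≤ M := hr ▸ hu0 (by constructor <;> [linarith; linarith])
    have habs : u < r - R ∨ r + R < u := by
      rcases lt_or_ge u (r - R) with h | h
      · exact Or.inl h
      · right
        by_contra hle
        exact hu ⟨h, le_of_not_gt hle⟩
    have h2 : R ^ 2 < (r - u) ^ 2 := by
      rcases habs with h | h <;> nlinarith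
    have h3 : M < (lam / 2) * (r - u) ^ 2 := by
      have hRsq : 2 * M / lam ≤ R ^ 2 := by
        have hs := Real.sqrt_nonneg (2 * M / lam)
        nlinarith
      have heq : 2 * M / lam * (lam / 2) = M := by field_simp
      have hA : lam / 2 * R ^ 2 < lam / 2 * (r - u) ^ 2 :=
        (mul_lt_mul_iff_right₀ (by positivity)).2 h2
      have hB : M ≤ lam / 2 * R ^ 2 := by
        calc M = 2 * M / lam * (lam / 2) := heq.symm
          _ ≤ R ^ 2 * (lam / 2) := mul_le_mul_of_nonneg_right hRsq (by positivity)
          _ = lam / 2 * R ^ 2 := by ring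
      linarith
    have h4 : 0 ≤ α * logisticLoss (u / α) :=
      le_of_lt (by have := logisticLoss_pos (u / α); positivity)
    have : M < psiF lam α r u := by unfold psiF; linarith
    linarith

lemma eeF_eq_min {lam α r u0 : ℝ} (hlam : 0 < lam) (hα : 0 < α)
    (h : ∀ u : ℝ, psiF lam α r u0 ≤ psiF lam α r u) :
    eeF lam α r = psiF lam α r u0 :=
  le_antisymm (ciInf_le (psiF_bddBelow hlam hα r) u0) (le_ciInf h)

lemma eeF_le {lam α : ℝ} (hlam : 0 < lam) (hα : 0 < α) (r u : ℝ) :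
    eeF lam α r ≤ psiF lam α r u :=
  ciInf_le (psiF_bddBelow hlam hα r) u

lemma eeF_nonneg {lam α : ℝ} (hlam : 0 < lam) (hα : 0 < α) (r : ℝ) :
    0 ≤ eeF lam α r :=
  le_ciInf fun u => psiF_nonneg hlam hα r u

/-- Perspective inequality for the logistic loss. -/
lemma perspective_ineq {α0 α1 a b u0 u1 : ℝ} (hα0 : 0 < α0) (hα1 : 0 < α1)
    (ha : 0 < a) (hb : 0 < b) (hab : a + b = 1) :
    (a * α0 + b * α1) * logisticLoss ((a * u0 + b * u1) / (a * α0 + b * α1))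
      ≤ a * α0 * logisticLoss (u0 / α0) + b * α1 * logisticLoss (u1 / α1) := by
  have hαt : 0 < a * α0 + b * α1 := by positivity
  set w : ℝ := a * α0 / (a * α0 + b * α1) with hw
  have hw0 : 0 ≤ w := by positivity
  have hw1 : 0 ≤ 1 - w := by
    have : w ≤ 1 := by
      rw [hw, div_le_one hαt]; nlinarith
    linarith
  have hkey : (a * u0 + b * u1) / (a * α0 + b * α1)
      = w * (u0 / α0) + (1 - w) * (u1 / α1) := by
    rw [hw]; field_simp; ring
  have hconv := logisticLoss_strictConvexOn.convexOn.2 (Set.mem_univ (u0 / α0))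
    (Set.mem_univ (u1 / α1)) hw0 hw1 (by ring)
  rw [hkey]
  calc (a * α0 + b * α1) * logisticLoss (w * (u0 / α0) + (1 - w) * (u1 / α1))
      ≤ (a * α0 + b * α1) * (w * logisticLoss (u0 / α0) + (1 - w) * logisticLoss (u1 / α1)) :=
        by exact (mul_le_mul_iff_right₀ hαt).2 (by simpa [smul_eq_mul] using hconv)
    _ = a * α0 * logisticLoss (u0 / α0) + b * α1 * logisticLoss (u1 / α1) := by
        rw [hw]; field_simp; try ring

/-- Strict perspective inequality. -/
lemma perspective_ineq_strict {α0 α1 a b u0 u1 : ℝ} (hα0 : 0 < α0) (hα1 : 0 < α1)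
    (ha : 0 < a) (hb : 0 < b) (hab : a + b = 1) (hne : u0 / α0 ≠ u1 / α1) :
    (a * α0 + b * α1) * logisticLoss ((a * u0 + b * u1) / (a * α0 + b * α1))
      < a * α0 * logisticLoss (u0 / α0) + b * α1 * logisticLoss (u1 / α1) := by
  have hαt : 0 < a * α0 + b * α1 := by positivity
  set w : ℝ := a * α0 / (a * α0 + b * α1) with hw
  have hw0 : 0 < w := by positivity
  have hw1 : 0 < 1 - w := by
    have : w < 1 := by
      rw [hw, div_lt_one hαt]; nlinarith
    linarith
  have hkey : (a * u0 + b * u1) / (a * α0 + b * α1)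
      = w * (u0 / α0) + (1 - w) * (u1 / α1) := by
    rw [hw]; field_simp; ring
  have hconv := logisticLoss_strictConvexOn.2 (Set.mem_univ (u0 / α0))
    (Set.mem_univ (u1 / α1)) hne hw0 hw1 (by ring)
  rw [hkey]
  calc (a * α0 + b * α1) * logisticLoss (w * (u0 / α0) + (1 - w) * (u1 / α1))
      < (a * α0 + b * α1) * (w * logisticLoss (u0 / α0) + (1 - w) * logisticLoss (u1 / α1)) :=
        by exact (mul_lt_mul_iff_right₀ hαt).2 (by simpa [smul_eq_mul] using hconv)
    _ = a * α0 * logisticLoss (u0 / α0) + b * α1 * logisticLoss (u1 / α1) := by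
        rw [hw]; field_simp; try ring

/-- Quadratic convexity. -/
lemma quad_ineq {lam a b x y : ℝ} (hlam : 0 < lam) (ha : 0 < a) (hb : 0 < b)
    (hab : a + b = 1) :
    (lam / 2) * (a * x + b * y) ^ 2 ≤ a * ((lam / 2) * x ^ 2) + b * ((lam / 2) * y ^ 2) := by
  have hb' : b = 1 - a := by linarith
  subst hb'
  have hid : a * ((lam / 2) * x ^ 2) + (1 - a) * ((lam / 2) * y ^ 2)
      - (lam / 2) * (a * x + (1 - a) * y) ^ 2 = (lam / 2) * (a * (1 - a)) * (x - y) ^ 2 := by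
    ring
  nlinarith [mul_nonneg (mul_nonneg (by positivity : (0:ℝ) ≤ lam / 2)
    (mul_nonneg ha.le hb.le)) (sq_nonneg (x - y))]

lemma quad_ineq_strict {lam a b x y : ℝ} (hlam : 0 < lam) (ha : 0 < a) (hb : 0 < b)
    (hab : a + b = 1) (hxy : x ≠ y) :
    (lam / 2) * (a * x + b * y) ^ 2 < a * ((lam / 2) * x ^ 2) + b * ((lam / 2) * y ^ 2) := by
  have hxy2 : (0:ℝ) < (x - y) ^ 2 := by
    have : x - y ≠ 0 := sub_ne_zero.2 hxy
    positivity
  have hb' : b = 1 - a := by linarith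
  subst hb'
  have hid : a * ((lam / 2) * x ^ 2) + (1 - a) * ((lam / 2) * y ^ 2)
      - (lam / 2) * (a * x + (1 - a) * y) ^ 2 = (lam / 2) * (a * (1 - a)) * (x - y) ^ 2 := by
    ring
  nlinarith [mul_pos (mul_pos (by positivity : (0:ℝ) < lam / 2) (mul_pos ha hb)) hxy2]

/-- Key joint convexity inequality for the Moreau envelope. -/
lemma key_ineq {lam α0 α1 a b : ℝ} (hlam : 0 < lam) (hα0 : 0 < α0) (hα1 : 0 < α1)
    (ha : 0 < a) (hb : 0 < b) (hab : a + b = 1) (r0 r1 u0 u1 : ℝ) :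
    eeF lam (a * α0 + b * α1) (a * r0 + b * r1)
      ≤ a * psiF lam α0 r0 u0 + b * psiF lam α1 r1 u1 := by
  have hαt : 0 < a * α0 + b * α1 := by positivity
  have h1 := eeF_le hlam hαt (a * r0 + b * r1) (a * u0 + b * u1)
  have hquad := quad_ineq (x := r0 - u0) (y := r1 - u1) hlam ha hb hab
  have hpers := perspective_ineq (u0 := u0) (u1 := u1) hα0 hα1 ha hb hab
  have hrw : a * r0 + b * r1 - (a * u0 + b * u1) = a * (r0 - u0) + b * (r1 - u1) := by ring
  unfold psiF at h1 ⊢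
  rw [hrw] at h1
  unfold psiF at *
  linarith

lemma key_ineq_strict {lam α0 α1 a b : ℝ} (hlam : 0 < lam) (hα0 : 0 < α0) (hα1 : 0 < α1)
    (ha : 0 < a) (hb : 0 < b) (hab : a + b = 1) (r0 r1 u0 u1 : ℝ)
    (hne : r0 - u0 ≠ r1 - u1 ∨ u0 / α0 ≠ u1 / α1) :
    eeF lam (a * α0 + b * α1) (a * r0 + b * r1)
      < a * psiF lam α0 r0 u0 + b * psiF lam α1 r1 u1 := by
  have hαt : 0 < a * α0 + b * α1 := by positivity
  have h1 := eeF_le hlam hαt (a * r0 + b * r1) (a * u0 + b * u1)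
  have hrw : a * r0 + b * r1 - (a * u0 + b * u1) = a * (r0 - u0) + b * (r1 - u1) := by ring
  unfold psiF at h1 ⊢
  rw [hrw] at h1
  rcases hne with hne | hne
  · have hquad := quad_ineq_strict (x := r0 - u0) (y := r1 - u1) hlam ha hb hab hne
    have hpers := perspective_ineq (u0 := u0) (u1 := u1) hα0 hα1 ha hb hab
    linarith
  · have hquad := quad_ineq (x := r0 - u0) (y := r1 - u1) hlam ha hb hab
    have hpers := perspective_ineq_strict (u0 := u0) (u1 := u1) hα0 hα1 ha hb hab hne
    linarith

/-- Convexity of the envelope in `r` for fixed `α`. -/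
lemma eeF_convexOn_r {lam α : ℝ} (hlam : 0 < lam) (hα : 0 < α) :
    ConvexOn ℝ Set.univ (eeF lam α) := by
  refine ⟨convex_univ, fun r0 _ r1 _ a b ha hb hab => ?_⟩
  rcases eq_or_lt_of_le ha with ha0 | ha
  · simp [← ha0, show b = 1 by linarith]
  rcases eq_or_lt_of_le hb with hb0 | hb
  · simp [← hb0, show a = 1 by linarith]
  obtain ⟨u0, hu0⟩ := exists_min_psiF hlam hα r0
  obtain ⟨u1, hu1⟩ := exists_min_psiF hlam hα r1
  have h := key_ineq (α0 := α) (α1 := α) hlam hα hα ha hb hab r0 r1 u0 u1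
  rw [show a * α + b * α = α by nlinarith] at h
  rw [eeF_eq_min hlam hα hu0, eeF_eq_min hlam hα hu1]
  simpa [smul_eq_mul] using h

lemma eeF_continuous_r {lam α : ℝ} (hlam : 0 < lam) (hα : 0 < α) :
    Continuous (eeF lam α) := by
  have := (eeF_convexOn_r hlam hα).continuousOn isOpen_univ
  rwa [← continuousOn_univ]

/-- Stationarity condition at a global minimizer. -/
lemma stationarity {lam α r u0 : ℝ} (hlam : 0 < lam) (hα : 0 < α)
    (hu0 : ∀ u : ℝ, psiF lam α r u0 ≤ psiF lam α r u) :
    lam * (u0 - r) = Real.exp (-(u0 / α)) / (1 + Real.exp (-(u0 / α))) := by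
  have hq : HasDerivAt (fun u : ℝ => (lam / 2) * (r - u) ^ 2) (lam * (u0 - r)) u0 := by
    have h := (((hasDerivAt_id u0).const_sub r).pow 2).const_mul (lam / 2)
    refine h.congr_deriv ?_
    simp
    ring
  have hl : HasDerivAt (fun u : ℝ => α * logisticLoss (u / α))
      (-Real.exp (-(u0 / α)) / (1 + Real.exp (-(u0 / α)))) u0 := by
    have hin : HasDerivAt (fun u : ℝ => u / α) (1 / α) u0 := by
      simpa using (hasDerivAt_id u0).div_const α
    have h := ((logisticLoss_hasDerivAt (u0 / α)).comp u0 hin).const_mul α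
    refine h.congr_deriv ?_
    field_simp
  have hψ : HasDerivAt (psiF lam α r)
      (lam * (u0 - r) + -Real.exp (-(u0 / α)) / (1 + Real.exp (-(u0 / α)))) u0 := hq.add hl
  have hmin : IsLocalMin (psiF lam α r) u0 := Filter.Eventually.of_forall hu0
  have := hmin.hasDerivAt_eq_zero hψ
  have hE : -Real.exp (-(u0 / α)) / (1 + Real.exp (-(u0 / α)))
      = -(Real.exp (-(u0 / α)) / (1 + Real.exp (-(u0 / α)))) := by ring
  rw [hE] at this
  linarith

/-- Equality case of the key inequality forces matching residuals and slopes. -/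
lemma eq_case {lam α0 α1 a b : ℝ} (hlam : 0 < lam) (hα0 : 0 < α0) (hα1 : 0 < α1)
    (ha : 0 < a) (hb : 0 < b) (hab : a + b = 1) {r0 r1 u0 u1 : ℝ}
    (hu0 : ∀ u : ℝ, psiF lam α0 r0 u0 ≤ psiF lam α0 r0 u)
    (hu1 : ∀ u : ℝ, psiF lam α1 r1 u1 ≤ psiF lam α1 r1 u)
    (heq : eeF lam (a * α0 + b * α1) (a * r0 + b * r1)
      = a * eeF lam α0 r0 + b * eeF lam α1 r1) :
    r0 - u0 = r1 - u1 ∧ u0 / α0 = u1 / α1 := by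
  by_contra hcon
  rw [not_and_or] at hcon
  have hstrict := key_ineq_strict hlam hα0 hα1 ha hb hab r0 r1 u0 u1
    (by tauto)
  rw [eeF_eq_min hlam hα0 hu0, eeF_eq_min hlam hα1 hu1] at heq
  rw [heq] at hstrict
  exact lt_irrefl _ hstrict

/-- If the convex combination inequality is an equality, the optimality conditions pin down
a common slope value `s`. -/
lemma eq_constraints {lam α0 α1 a b r0 r1 : ℝ} (hlam : 0 < lam) (hα0 : 0 < α0) (hα1 : 0 < α1)
    (ha : 0 < a) (hb : 0 < b) (hab : a + b = 1)
    (heq : eeF lam (a * α0 + b * α1) (a * r0 + b * r1)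
      = a * eeF lam α0 r0 + b * eeF lam α1 r1) :
    ∃ s : ℝ, (α0 - α1) * s = r0 - r1 ∧
      lam * (α0 * s - r0) = Real.exp (-s) / (1 + Real.exp (-s)) := by
  obtain ⟨u0, hu0⟩ := exists_min_psiF hlam hα0 r0
  obtain ⟨u1, hu1⟩ := exists_min_psiF hlam hα1 r1
  obtain ⟨hres, hslope⟩ := eq_case hlam hα0 hα1 ha hb hab hu0 hu1 heq
  refine ⟨u0 / α0, ?_, ?_⟩
  · have hu0e : α0 * (u0 / α0) = u0 := by field_simp
    have hu1e : α1 * (u0 / α0) = u1 := by rw [hslope]; field_simp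
    have hexp : (α0 - α1) * (u0 / α0) = α0 * (u0 / α0) - α1 * (u0 / α0) := by ring
    rw [hexp, hu0e, hu1e]; linarith
  · have hst := stationarity hlam hα0 hu0
    have hu0e : α0 * (u0 / α0) = u0 := by field_simp
    rw [hu0e]
    linarith [hst]

lemma integrable_sq_gaussian : Integrable (fun x : ℝ => x ^ 2) (gaussianReal 0 1) := by
  rw [gaussianReal_of_var_ne_zero _ one_ne_zero]
  rw [integrable_withDensity_iff (measurable_gaussianPDF _ _)
    (Filter.Eventually.of_forall fun x => ENNReal.ofReal_lt_top)]
  have hint : Integrable (fun x : ℝ => x ^ 2 * Real.exp (-(1/2 : ℝ) * x ^ 2)) volume := by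
    have h := integrable_rpow_mul_exp_neg_mul_sq (b := 1/2) (by norm_num) (s := 2)
      (by norm_num)
    refine h.congr ?_
    filter_upwards with x
    rw [show ((2:ℝ) : ℝ) = ((2:ℕ) : ℝ) by norm_num, Real.rpow_natCast]
  have h2 := hint.mul_const ((Real.sqrt (2 * Real.pi * ((1 : NNReal) : ℝ)))⁻¹)
  refine h2.congr ?_
  filter_upwards with x
  rw [gaussianPDF]
  rw [ENNReal.toReal_ofReal (gaussianPDFReal_nonneg _ _ _)]
  rw [gaussianPDFReal]
  push_cast
  ring_nf

lemma eeF_le_quad {lam α : ℝ} (hlam : 0 < lam) (hα : 0 < α) (r : ℝ) :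
    eeF lam α r ≤ (lam / 2) * r ^ 2 + α * Real.log 2 := by
  have h := eeF_le hlam hα r 0
  have : psiF lam α r 0 = (lam / 2) * r ^ 2 + α * Real.log 2 := by
    unfold psiF logisticLoss
    norm_num
  linarith


/-- with `H` standard Gaussian and `X = GY` (`G` standard Gaussian independent
of `H`, `Y ∈ {±1}`) such that `(H, X)` has strictly positive joint density on `ℝ²`, the function
`G_λ(α, Υ) = E[min_u {(λ/2)(H + ΥX − u)² + αℓ(u/α)}]` is jointly strictly convex on
`(0, ∞) × ℝ`. -/
theorem moreau_logistic_strictConvexOn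
    {Ω : Type*} [MeasurableSpace Ω] (P : Measure Ω) [IsProbabilityMeasure P]
    (H G Y : Ω → ℝ)
    (hHm : Measurable H) (hGm : Measurable G) (hYm : Measurable Y)
    (hY : ∀ ω, Y ω = 1 ∨ Y ω = -1)
    (hH : Measure.map H P = stdGaussianR) (hG : Measure.map G P = stdGaussianR)
    (hindep : IndepFun G H P)
    (X : Ω → ℝ) (hX : X = fun ω => G ω * Y ω)
    (dens : ℝ × ℝ → ℝ) (hdens : ∀ z, 0 < dens z)
    (hjoint : Measure.map (fun ω => (H ω, X ω)) P
      = (volume : Measure (ℝ × ℝ)).withDensity fun z => ENNReal.ofReal (dens z))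
    (lam : ℝ) (hlam : 0 < lam) :
    StrictConvexOn ℝ ((Set.Ioi (0 : ℝ)) ×ˢ (Set.univ : Set ℝ))
      (fun q : ℝ × ℝ =>
        ∫ ω, (⨅ u : ℝ, (lam / 2) * (H ω + q.2 * X ω - u) ^ 2
          + q.1 * logisticLoss (u / q.1)) ∂P) := by
  have hXm : Measurable X := by rw [hX]; exact hGm.mul hYm
  -- square integrability
  have hH2 : Integrable (fun ω => (H ω) ^ 2) P := by
    have h := (integrable_map_measure
      (f := H) (g := fun x : ℝ => x ^ 2)
      (by fun_prop) hHm.aemeasurable).1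
      (by rw [hH]; exact integrable_sq_gaussian)
    exact h
  have hG2 : Integrable (fun ω => (G ω) ^ 2) P := by
    have h := (integrable_map_measure
      (f := G) (g := fun x : ℝ => x ^ 2)
      (by fun_prop) hGm.aemeasurable).1
      (by rw [hG]; exact integrable_sq_gaussian)
    exact h
  have hX2 : Integrable (fun ω => (X ω) ^ 2) P := by
    refine hG2.congr ?_
    filter_upwards with ω
    rcases hY ω with h | h <;> simp [hX, h, mul_pow] <;> ring
  have hR2 : ∀ c : ℝ, Integrable (fun ω => (H ω + c * X ω) ^ 2) P := by
    intro c
    refine Integrable.mono' ((hH2.const_mul 2).add (hX2.const_mul (2 * c ^ 2)))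
      ((hHm.add (hXm.const_mul c)).pow_const 2).aestronglyMeasurable ?_
    filter_upwards with ω
    rw [Real.norm_eq_abs, abs_of_nonneg (sq_nonneg _)]
    simp only [Pi.add_apply]
    nlinarith [sq_nonneg (H ω - c * X ω), sq_nonneg (c * (H ω) - X ω), sq_nonneg (H ω * c - X ω)]
  have hInt : ∀ α c : ℝ, 0 < α →
      Integrable (fun ω => eeF lam α (H ω + c * X ω)) P := by
    intro α c hα
    refine Integrable.mono' (((hR2 c).const_mul (lam / 2)).add
      (integrable_const (α * Real.log 2)))
      (((eeF_continuous_r hlam hα).measurable.comp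
        (hHm.add (hXm.const_mul c))).aestronglyMeasurable) ?_
    filter_upwards with ω
    rw [Real.norm_eq_abs, abs_of_nonneg (eeF_nonneg hlam hα _)]
    exact eeF_le_quad hlam hα _
  -- start strict convexity
  refine ⟨(convex_Ioi (0:ℝ)).prod convex_univ, ?_⟩
  intro p hp q hq hpq a b ha hb hab
  obtain ⟨hα0, -⟩ := hp
  obtain ⟨hα1, -⟩ := hq
  rw [Set.mem_Ioi] at hα0 hα1
  set α0 := p.1 with hα0def
  set Υ0 := p.2 with hΥ0def
  set α1 := q.1 with hα1def
  set Υ1 := q.2 with hΥ1def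
  have hmfst : (a • p + b • q).1 = a * α0 + b * α1 := rfl
  have hmsnd : (a • p + b • q).2 = a * Υ0 + b * Υ1 := rfl
  have hmα : 0 < a * α0 + b * α1 := by positivity
  -- the three integrands
  set f0 : Ω → ℝ := fun ω => eeF lam α0 (H ω + Υ0 * X ω) with hf0
  set f1 : Ω → ℝ := fun ω => eeF lam α1 (H ω + Υ1 * X ω) with hf1
  set fm : Ω → ℝ := fun ω => eeF lam (a * α0 + b * α1)
    (H ω + (a * Υ0 + b * Υ1) * X ω) with hfm
  have hrfl0 :
      (fun ω => (⨅ u : ℝ, (lam / 2) * (H ω + p.2 * X ω - u) ^ 2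
        + p.1 * logisticLoss (u / p.1))) = f0 := rfl
  have hrfl1 :
      (fun ω => (⨅ u : ℝ, (lam / 2) * (H ω + q.2 * X ω - u) ^ 2
        + q.1 * logisticLoss (u / q.1))) = f1 := rfl
  have hrflm :
      (fun ω => (⨅ u : ℝ, (lam / 2) * (H ω + (a • p + b • q).2 * X ω - u) ^ 2
        + (a • p + b • q).1 * logisticLoss (u / (a • p + b • q).1))) = fm := by
    rw [hmfst, hmsnd] at *
    rfl
  simp only [hrfl0, hrfl1, hrflm, smul_eq_mul]
  -- pointwise inequality
  have hpt : ∀ ω, fm ω ≤ a * f0 ω + b * f1 ω := by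
    intro ω
    obtain ⟨u0, hu0⟩ := exists_min_psiF hlam hα0 (H ω + Υ0 * X ω)
    obtain ⟨u1, hu1⟩ := exists_min_psiF hlam hα1 (H ω + Υ1 * X ω)
    have hkey := key_ineq hlam hα0 hα1 ha hb hab
      (H ω + Υ0 * X ω) (H ω + Υ1 * X ω) u0 u1
    have hr : a * (H ω + Υ0 * X ω) + b * (H ω + Υ1 * X ω)
        = H ω + (a * Υ0 + b * Υ1) * X ω := by linear_combination H ω * hab
    rw [hr] at hkey
    rw [hfm, hf0, hf1]
    simp only
    rw [eeF_eq_min hlam hα0 hu0, eeF_eq_min hlam hα1 hu1]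
    exact hkey
  have int0 := hInt α0 Υ0 hα0
  have int1 := hInt α1 Υ1 hα1
  have intm := hInt (a * α0 + b * α1) (a * Υ0 + b * Υ1) hmα
  -- the nonnegative gap function
  set g : Ω → ℝ := fun ω => a * f0 ω + b * f1 ω - fm ω with hgdef
  have hg_int : Integrable g P := ((int0.const_mul a).add (int1.const_mul b)).sub intm
  have hg_nonneg : 0 ≤ g := fun ω => by
    have := hpt ω; simp only [hgdef, Pi.zero_apply]; linarith
  -- the planar gap function
  set D : ℝ × ℝ → ℝ := fun z =>
    a * eeF lam α0 (z.1 + Υ0 * z.2) + b * eeF lam α1 (z.1 + Υ1 * z.2)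
      - eeF lam (a * α0 + b * α1) (z.1 + (a * Υ0 + b * Υ1) * z.2) with hDdef
  have hDcont : Continuous D := by
    refine Continuous.sub (Continuous.add ?_ ?_) ?_
    · exact continuous_const.mul ((eeF_continuous_r hlam hα0).comp
        (continuous_fst.add (continuous_const.mul continuous_snd)))
    · exact continuous_const.mul ((eeF_continuous_r hlam hα1).comp
        (continuous_fst.add (continuous_const.mul continuous_snd)))
    · exact (eeF_continuous_r hlam hmα).comp
        (continuous_fst.add (continuous_const.mul continuous_snd))
  have hgD : g = fun ω => D (H ω, X ω) := by
    funext ω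
    simp only [hgdef, hDdef, hf0, hf1, hfm]
  -- the equality (zero) set is Lebesgue-null
  have hEmeas : MeasurableSet {z : ℝ × ℝ | D z = 0} :=
    hDcont.measurable (measurableSet_singleton 0)
  have hEnull : volume {z : ℝ × ℝ | D z = 0} = 0 := by
    have hconstr : ∀ z : ℝ × ℝ, D z = 0 → ∃ s : ℝ,
        (α0 - α1) * s = (Υ0 - Υ1) * z.2 ∧
        lam * (α0 * s - (z.1 + Υ0 * z.2)) = Real.exp (-s) / (1 + Real.exp (-s)) := by
      intro z hz
      have heq : eeF lam (a * α0 + b * α1)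
          (a * (z.1 + Υ0 * z.2) + b * (z.1 + Υ1 * z.2))
          = a * eeF lam α0 (z.1 + Υ0 * z.2) + b * eeF lam α1 (z.1 + Υ1 * z.2) := by
        have hr : a * (z.1 + Υ0 * z.2) + b * (z.1 + Υ1 * z.2)
            = z.1 + (a * Υ0 + b * Υ1) * z.2 := by linear_combination z.1 * hab
        rw [hr]
        have := hz
        simp only [hDdef] at this
        linarith
      obtain ⟨s, hs1, hs2⟩ := eq_constraints hlam hα0 hα1 ha hb hab heq
      refine ⟨s, ?_, hs2⟩
      rw [hs1]; ring
    rcases eq_or_ne α0 α1 with hαeq | hαne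
    · -- α0 = α1, so Υ0 ≠ Υ1, and equality forces z.2 = 0
      have hΥne : Υ0 ≠ Υ1 := by
        intro hΥeq
        exact hpq (Prod.ext hαeq hΥeq)
      have hsub : {z : ℝ × ℝ | D z = 0} ⊆ {z : ℝ × ℝ | z.2 = 0} := by
        intro z hz
        obtain ⟨s, hs1, -⟩ := hconstr z hz
        rw [hαeq, sub_self, zero_mul] at hs1
        have : Υ0 - Υ1 ≠ 0 := sub_ne_zero.2 hΥne
        simp only [Set.mem_setOf_eq]
        by_contra hz2
        exact (mul_ne_zero this hz2) hs1.symm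
      refine measure_mono_null hsub ?_
      rw [show {z : ℝ × ℝ | z.2 = 0} = Set.univ ×ˢ ({0} : Set ℝ) by
        ext ⟨h, x⟩; simp [eq_comm]]
      rw [Measure.volume_eq_prod, Measure.prod_prod]
      simp
    · -- α0 ≠ α1 : for each x, the section in h is a subsingleton
      rw [Measure.volume_eq_prod, Measure.prod_apply_symm hEmeas]
      have hsec : ∀ x : ℝ, ((fun h => (h, x)) ⁻¹' {z : ℝ × ℝ | D z = 0}).Subsingleton := by
        intro x h hh h' hh'
        obtain ⟨s, hs1, hs2⟩ := hconstr (h, x) hh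
        obtain ⟨s', hs1', hs2'⟩ := hconstr (h', x) hh'
        have hne : α0 - α1 ≠ 0 := sub_ne_zero.2 hαne
        have hss' : s = s' := mul_left_cancel₀ hne (hs1.trans hs1'.symm)
        rw [← hss'] at hs2'
        have hmul : lam * (α0 * s - (h + Υ0 * x))
            = lam * (α0 * s - (h' + Υ0 * x)) := hs2.trans hs2'.symm
        have hcc := mul_left_cancel₀ (ne_of_gt hlam) hmul
        linarith
      have : ∀ x : ℝ, volume ((fun h => (h, x)) ⁻¹' {z : ℝ × ℝ | D z = 0}) = 0 :=
        fun x => (hsec x).measure_zero volume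
      simp only [this]
      simp
  -- positivity of the expected gap
  have hprob : IsProbabilityMeasure (Measure.map (fun ω => (H ω, X ω)) P) :=
    Measure.isProbabilityMeasure_map (hHm.prodMk hXm).aemeasurable
  have hν0 : Measure.map (fun ω => (H ω, X ω)) P {z : ℝ × ℝ | D z = 0} = 0 := by
    rw [hjoint, withDensity_apply _ hEmeas, setLIntegral_measure_zero _ _ hEnull]
  have hsupp : P (Function.support g) = 1 := by
    have hgs : Function.support g
        = (fun ω => (H ω, X ω)) ⁻¹' {z : ℝ × ℝ | D z = 0}ᶜ := by
      rw [hgD]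
      ext ω
      simp [Function.mem_support]
    rw [hgs, ← Measure.map_apply (hHm.prodMk hXm) hEmeas.compl]
    rw [measure_compl hEmeas (measure_ne_top _ _), hν0]
    simp [measure_univ]
  have hpos : 0 < ∫ ω, g ω ∂P := by
    rw [integral_pos_iff_support_of_nonneg hg_nonneg hg_int]
    rw [hsupp]
    norm_num
  have hsplit : ∫ ω, g ω ∂P
      = a * ∫ ω, f0 ω ∂P + b * ∫ ω, f1 ω ∂P - ∫ ω, fm ω ∂P := by
    have h1 : Integrable (fun ω => a * f0 ω + b * f1 ω) P :=
      (int0.const_mul a).add (int1.const_mul b)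
    rw [hgdef]
    rw [integral_sub h1 intm]
    rw [integral_add (int0.const_mul a) (int1.const_mul b)]
    rw [integral_const_mul, integral_const_mul]
  linarith [hpos, hsplit.symm.le, hsplit.le]
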